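/- Let ρ be a nonzero real number and G a symmetric n×n real matrix with G² = ρ²·1 (1 the identity matrix). For u = (u_1,…,u_n) in an open subset of ℝⁿ on which the matrix 1 − (1/ρ)·tanh(ρU)·G is invertible, where U = diag(u_1,…,u_n) and tanh(ρU) = diag(tanh ρu_1,…,tanh ρu_n), define for i ≠ j the functions γ_ij(u) = [ G·(1 − (1/ρ)·tanh(ρU)·G)⁻¹ ]_{ij} / ( cosh(ρu_i)·cosh(ρu_j) ). Then these functions satisfy the Darboux–Egorov equations: ∂γ_ij/∂u_k = γ_ik·γ_kj for pairwise distinct i, j, k, and Σ_{k=1}^n ∂γ_ij/∂u_k = 0 for all i ≠ j. -/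

import Mathlib

open Matrix

attribute [local instance] Matrix.linftyOpNormedRing Matrix.linftyOpNormedAlgebra

private lemma stmt12.tanh_deriv (ρ x : ℝ) :
    HasDerivAt (fun t => Real.tanh (ρ * t)) (ρ / Real.cosh (ρ * x) ^ 2) x := by
  have hs : HasDerivAt (fun t : ℝ => Real.sinh (ρ * t)) (ρ * Real.cosh (ρ * x)) x := by
    simpa [mul_comm, Function.comp_def] using (Real.hasDerivAt_sinh (ρ * x)).comp x ((hasDerivAt_id x).const_mul ρ)
  have hc : HasDerivAt (fun t : ℝ => Real.cosh (ρ * t)) (ρ * Real.sinh (ρ * x)) x := by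
    simpa [mul_comm, Function.comp_def] using (Real.hasDerivAt_cosh (ρ * x)).comp x ((hasDerivAt_id x).const_mul ρ)
  have h := hs.div hc (Real.cosh_pos (ρ * x)).ne'
  have heq : ((fun t => Real.sinh (ρ * t)) / fun t => Real.cosh (ρ * t)) = fun t => Real.tanh (ρ * t) := by
    funext t; simp [Real.tanh_eq_sinh_div_cosh]
  rw [heq] at h
  refine h.congr_deriv ?_
  rw [show ρ * Real.cosh (ρ * x) * Real.cosh (ρ * x) - Real.sinh (ρ * x) * (ρ * Real.sinh (ρ * x)) = ρ from by
    linear_combination ρ * Real.cosh_sq_sub_sinh_sq (ρ * x)]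

private lemma stmt12.one_sub_tanh_sq (y : ℝ) : 1 - Real.tanh y ^ 2 = 1 / Real.cosh y ^ 2 := by
  rw [Real.tanh_eq_sinh_div_cosh]
  have hc := (Real.cosh_pos y).ne'
  field_simp
  linear_combination Real.cosh_sq_sub_sinh_sq y

private lemma stmt12.mul_std_mul_entry {n : ℕ} (X Y : Matrix (Fin n) (Fin n) ℝ) (k i j : Fin n) :
    (X * Matrix.single k k (1:ℝ) * Y) i j = X i k * Y k j := by
  simp [Matrix.mul_apply, Matrix.single, ite_and, Finset.sum_ite_eq,
    Finset.sum_ite_eq', Matrix.of_apply]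

private lemma stmt12.diag_update_split {n : ℕ} (u : Fin n → ℝ) (k : Fin n) (ρ t : ℝ) :
    Matrix.diagonal (fun l => Real.tanh (ρ * Function.update u k t l)) =
      Matrix.diagonal (fun l => if l = k then 0 else Real.tanh (ρ * u l))
        + Real.tanh (ρ * t) • Matrix.single k k (1:ℝ) := by
  ext a b
  by_cases hab : a = b
  · subst hab
    by_cases hak : a = k
    · subst hak; simp [Matrix.single]
    · simp [Matrix.single, hak, Function.update_of_ne hak, Ne.symm hak]
  · have hcon : ¬(k = a ∧ k = b) := fun ⟨h1, h2⟩ => hab (h1 ▸ h2 ▸ rfl)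
    simp [Matrix.diagonal_apply_ne _ hab, Matrix.single, hcon]

private lemma stmt12.entry_deriv {n : ℕ} (G A0 B0 : Matrix (Fin n) (Fin n) ℝ) (ρ x0 : ℝ)
    (a b : Fin n) (hunit : IsUnit (A0 + Real.tanh (ρ * x0) • B0)) :
    HasDerivAt (fun t => (G * (A0 + Real.tanh (ρ * t) • B0)⁻¹) a b)
      ((G * (-((A0 + Real.tanh (ρ * x0) • B0)⁻¹ * ((ρ / Real.cosh (ρ * x0) ^ 2) • B0) *
         (A0 + Real.tanh (ρ * x0) • B0)⁻¹))) a b) x0 := by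
  set M := A0 + Real.tanh (ρ * x0) • B0 with hM
  have hh : HasDerivAt (fun t => A0 + Real.tanh (ρ * t) • B0)
      ((ρ / Real.cosh (ρ * x0) ^ 2) • B0) x0 := ((stmt12.tanh_deriv ρ x0).smul_const B0).const_add A0
  have hinv := (hasFDerivAt_ringInverse (𝕜 := ℝ) hunit.unit).comp_hasDerivAt x0 hh
  have hL : HasDerivAt (fun t => Ring.inverse (A0 + Real.tanh (ρ * t) • B0))
      (-(M⁻¹ * ((ρ / Real.cosh (ρ * x0) ^ 2) • B0) * M⁻¹)) x0 := by
    refine hinv.congr_deriv ?_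
    simp only [ContinuousLinearMap.neg_apply, ContinuousLinearMap.mulLeftRight_apply,
      Matrix.coe_units_inv, hunit.unit_spec]
  have hL' : HasDerivAt (fun t => (A0 + Real.tanh (ρ * t) • B0)⁻¹)
      (-(M⁻¹ * ((ρ / Real.cosh (ρ * x0) ^ 2) • B0) * M⁻¹)) x0 := by
    simpa only [Matrix.nonsing_inv_eq_ringInverse] using hL
  let L : Matrix (Fin n) (Fin n) ℝ →ₗ[ℝ] ℝ :=
    { toFun := fun X => (G * X) a b
      map_add' := by intros; simp [Matrix.mul_add]
      map_smul' := by intros; simp [Matrix.mul_smul] }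
  exact L.toContinuousLinearMap.hasFDerivAt.comp_hasDerivAt x0 hL'

/-- Let `ρ ≠ 0` and `G` symmetric with `G² = ρ² 1`.  On the open
set where `1 - (1/ρ) tanh(ρU) G` is invertible, `U = diag u`, define for `i ≠ j`
`γ_ij(u) = [G (1 - (1/ρ) tanh(ρU) G)⁻¹]_{ij} / (cosh ρuᵢ cosh ρuⱼ)`.  Then these
functions satisfy the Darboux–Egorov equations: `∂γ_ij/∂uₖ = γ_ik γ_kj` for
pairwise distinct `i, j, k`, and `∑ₖ ∂γ_ij/∂uₖ = 0` for all `i ≠ j`. -/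
theorem stmt12 {n : ℕ} (ρ : ℝ) (hρ : ρ ≠ 0)
    (G : Matrix (Fin n) (Fin n) ℝ) (hG : G.IsSymm)
    (hG2 : G * G = (ρ ^ 2 : ℝ) • (1 : Matrix (Fin n) (Fin n) ℝ))
    (γ : (Fin n → ℝ) → Fin n → Fin n → ℝ)
    (hγ : ∀ u : Fin n → ℝ, ∀ i j : Fin n, i ≠ j →
      γ u i j =
        (G * (1 - ρ⁻¹ •
            Matrix.diagonal (fun k => Real.tanh (ρ * u k)) * G)⁻¹) i j
          / (Real.cosh (ρ * u i) * Real.cosh (ρ * u j))) :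
    ∀ u : Fin n → ℝ,
      IsUnit (1 - ρ⁻¹ • Matrix.diagonal (fun k => Real.tanh (ρ * u k)) * G) →
      ∀ i j : Fin n, i ≠ j →
        ∃ D : Fin n → ℝ,
          (∀ k : Fin n,
            HasDerivAt (fun t : ℝ => γ (Function.update u k t) i j) (D k) (u k)) ∧
          (∀ k : Fin n, k ≠ i → k ≠ j → D k = γ u i k * γ u k j) ∧
          ∑ k, D k = 0 := by
  intro u hU i j hij
  classical
  set T : Matrix (Fin n) (Fin n) ℝ := Matrix.diagonal (fun l => Real.tanh (ρ * u l)) with hTdef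
  set M : Matrix (Fin n) (Fin n) ℝ := 1 - ρ⁻¹ • T * G with hMdef
  set Γ : Matrix (Fin n) (Fin n) ℝ := G * M⁻¹ with hΓdef
  have hdet : IsUnit M.det := (Matrix.isUnit_iff_isUnit_det M).mp hU
  have hMinv : M * M⁻¹ = 1 := Matrix.mul_nonsing_inv M hdet
  have hMinv' : M⁻¹ * M = 1 := Matrix.nonsing_inv_mul M hdet
  have hdetT : IsUnit Mᵀ.det := by rw [Matrix.det_transpose]; exact hdet
  have hMTinv : Mᵀ * Mᵀ⁻¹ = 1 := Matrix.mul_nonsing_inv _ hdetT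
  have hMTinv' : Mᵀ⁻¹ * Mᵀ = 1 := Matrix.nonsing_inv_mul _ hdetT
  -- basic matrix identities
  have hTtrans : Tᵀ = T := Matrix.diagonal_transpose _
  have hMT : Mᵀ = 1 - ρ⁻¹ • G * T := by
    rw [hMdef, Matrix.transpose_sub, Matrix.transpose_one, Matrix.transpose_mul,
      Matrix.transpose_smul, hTtrans, hG.eq]
    rw [Matrix.mul_smul, Matrix.smul_mul]
  have h1 : T * G = ρ • (1 - M) := by
    rw [hMdef, sub_sub_cancel, Matrix.smul_mul, smul_smul, mul_inv_cancel₀ hρ, one_smul]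
  have h1' : G * T = ρ • (1 - Mᵀ) := by
    rw [hMT, sub_sub_cancel, Matrix.smul_mul, smul_smul, mul_inv_cancel₀ hρ, one_smul]
  have h2 : T * Γ = ρ • (M⁻¹ - 1) := by
    rw [hΓdef, ← mul_assoc, h1, Matrix.smul_mul, sub_mul, one_mul, hMinv]
  have hGM : G * M = Mᵀ * G := by
    rw [hMdef, hMT, mul_sub, sub_mul, mul_one, one_mul]
    congr 1
    simp only [Matrix.smul_mul, Matrix.mul_smul, mul_assoc]
  have h4 : Γ = Mᵀ⁻¹ * G := by
    have e1 : Mᵀ * Γ = G := by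
      rw [hΓdef, ← mul_assoc, ← hGM, mul_assoc, hMinv, mul_one]
    rw [← e1, ← mul_assoc, hMTinv', one_mul]
  have h5 : Γ * T = ρ • (Mᵀ⁻¹ - 1) := by
    rw [h4, mul_assoc, h1', Matrix.mul_smul, mul_sub, mul_one, hMTinv']
  have h6 : Γ * Γ = (ρ ^ 2) • (Mᵀ⁻¹ * M⁻¹) := by
    nth_rewrite 1 [h4]
    nth_rewrite 1 [hΓdef]
    calc Mᵀ⁻¹ * G * (G * M⁻¹) = Mᵀ⁻¹ * (G * G) * M⁻¹ := by
          rw [mul_assoc, mul_assoc, mul_assoc]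
      _ = (ρ ^ 2) • (Mᵀ⁻¹ * M⁻¹) := by
          rw [hG2, Matrix.mul_smul, Matrix.smul_mul, mul_one]
  have h7 : Γ * (T * T) * Γ = (ρ ^ 2) • ((Mᵀ⁻¹ - 1) * (M⁻¹ - 1)) := by
    calc Γ * (T * T) * Γ = (Γ * T) * (T * Γ) := by noncomm_ring
      _ = (ρ • (Mᵀ⁻¹ - 1)) * (ρ • (M⁻¹ - 1)) := by rw [h5, h2]
      _ = (ρ ^ 2) • ((Mᵀ⁻¹ - 1) * (M⁻¹ - 1)) := by
          rw [Matrix.smul_mul, Matrix.mul_smul, smul_smul, pow_two]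
  have main : Γ * Γ - Γ * (T * T) * Γ - ρ • (T * Γ + Γ * T)
      = (ρ ^ 2) • (1 : Matrix (Fin n) (Fin n) ℝ) := by
    rw [h6, h7, h2, h5, smul_add, smul_smul, smul_smul, ← pow_two, ← smul_add, ← smul_sub,
      ← smul_sub]
    congr 1
    noncomm_ring
  -- key scalar identity
  have key : ∑ a, Γ i a * Γ a j * (1 / Real.cosh (ρ * u a) ^ 2)
      = ρ * Real.tanh (ρ * u i) * Γ i j + ρ * (Γ i j * Real.tanh (ρ * u j)) := by
    have hmain := congrFun (congrFun main i) j
    have e1 : (Γ * Γ) i j = ∑ a, Γ i a * Γ a j := Matrix.mul_apply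
    have e2 : (Γ * (T * T) * Γ) i j = ∑ a, Γ i a * Real.tanh (ρ * u a) ^ 2 * Γ a j := by
      rw [hTdef, Matrix.diagonal_mul_diagonal]
      rw [Matrix.mul_apply]
      congr 1; funext a
      rw [Matrix.mul_diagonal]
      ring_nf
    have e3 : (T * Γ) i j = Real.tanh (ρ * u i) * Γ i j := by
      rw [hTdef, Matrix.diagonal_mul]
    have e4 : (Γ * T) i j = Γ i j * Real.tanh (ρ * u j) := by
      rw [hTdef, Matrix.mul_diagonal]
    have e5 : ((ρ ^ 2) • (1 : Matrix (Fin n) (Fin n) ℝ)) i j = 0 := by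
      rw [Matrix.smul_apply, Matrix.one_apply_ne hij, smul_zero]
    rw [Matrix.sub_apply, Matrix.sub_apply, Matrix.smul_apply, Matrix.add_apply,
      e1, e2, e3, e4, e5] at hmain
    have e6 : ∀ a : Fin n, Γ i a * Γ a j * (1 / Real.cosh (ρ * u a) ^ 2)
        = Γ i a * Γ a j - Γ i a * Real.tanh (ρ * u a) ^ 2 * Γ a j := by
      intro a
      rw [← stmt12.one_sub_tanh_sq (ρ * u a)]
      ring
    rw [Finset.sum_congr rfl (fun a _ => e6 a), Finset.sum_sub_distrib]
    have e7 : ρ • (Real.tanh (ρ * u i) * Γ i j + Γ i j * Real.tanh (ρ * u j))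
        = ρ * Real.tanh (ρ * u i) * Γ i j + ρ * (Γ i j * Real.tanh (ρ * u j)) := by
      rw [smul_eq_mul]; ring
    linarith [hmain, e7.symm.le]
  have hchi : Real.cosh (ρ * u i) ≠ 0 := (Real.cosh_pos _).ne'
  have hchj : Real.cosh (ρ * u j) ≠ 0 := (Real.cosh_pos _).ne'
  -- the candidate derivative
  refine ⟨fun k => (Γ i k * Γ k j / Real.cosh (ρ * u k) ^ 2
        * (Real.cosh (ρ * u i) * Real.cosh (ρ * u j))
      - Γ i j * ((if i = k then ρ * Real.sinh (ρ * u k) else 0) * Real.cosh (ρ * u j)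
        + Real.cosh (ρ * u i) * (if j = k then ρ * Real.sinh (ρ * u k) else 0)))
      / (Real.cosh (ρ * u i) * Real.cosh (ρ * u j)) ^ 2,
    ?_, ?_, ?_⟩
  · -- HasDerivAt
    intro k
    set A0 : Matrix (Fin n) (Fin n) ℝ :=
      1 - ρ⁻¹ • Matrix.diagonal (fun l => if l = k then 0 else Real.tanh (ρ * u l)) * G with hA0
    set B0 : Matrix (Fin n) (Fin n) ℝ :=
      (-ρ⁻¹) • (Matrix.single k k (1:ℝ) * G) with hB0
    have heq : ∀ t : ℝ,
        1 - ρ⁻¹ • Matrix.diagonal (fun l => Real.tanh (ρ * Function.update u k t l)) * G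
          = A0 + Real.tanh (ρ * t) • B0 := by
      intro t
      rw [stmt12.diag_update_split u k ρ t, hA0, hB0]
      simp only [Matrix.add_mul, Matrix.smul_mul, smul_add, Matrix.mul_smul, smul_smul]
      module
    have hMA : A0 + Real.tanh (ρ * u k) • B0 = M := by
      rw [← heq (u k), hMdef, hTdef]
      congr 2
      funext l
      rw [Function.update_eq_self]
    have hunit : IsUnit (A0 + Real.tanh (ρ * u k) • B0) := by rw [hMA]; exact hU
    have hnum0 := stmt12.entry_deriv G A0 B0 ρ (u k) i j hunit
    rw [hMA] at hnum0
    -- simplify the derivative value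
    have hval : (G * (-(M⁻¹ * ((ρ / Real.cosh (ρ * u k) ^ 2) • B0) * M⁻¹))) i j
        = Γ i k * Γ k j / Real.cosh (ρ * u k) ^ 2 := by
      rw [hB0]
      rw [smul_smul]
      have hsc : ρ / Real.cosh (ρ * u k) ^ 2 * -ρ⁻¹ = -(1 / Real.cosh (ρ * u k) ^ 2) := by
        field_simp
      rw [hsc]
      rw [Matrix.mul_smul, Matrix.smul_mul, neg_smul, neg_neg, Matrix.mul_smul, Matrix.smul_apply]
      have hassoc : G * (M⁻¹ * (Matrix.single k k (1:ℝ) * G) * M⁻¹)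
          = Γ * Matrix.single k k (1:ℝ) * Γ := by
        rw [hΓdef]; noncomm_ring
      rw [hassoc, stmt12.mul_std_mul_entry]
      rw [smul_eq_mul]; ring
    rw [hval] at hnum0
    have hg : ∀ a : Fin n, HasDerivAt (fun t => Real.cosh (ρ * Function.update u k t a))
        (if a = k then ρ * Real.sinh (ρ * u k) else 0) (u k) := by
      intro a
      by_cases hak : a = k
      · subst hak
        simp only [Function.update_self, if_pos rfl]
        simpa [mul_comm, Function.comp_def] using
          (Real.hasDerivAt_cosh (ρ * u a)).comp (u a) ((hasDerivAt_id (u a)).const_mul ρ)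
      · simp only [Function.update_of_ne hak, if_neg hak]
        exact hasDerivAt_const _ _
    have hden := (hg i).mul (hg j)
    have hdenne : (fun t => Real.cosh (ρ * Function.update u k t i)
        * Real.cosh (ρ * Function.update u k t j)) (u k) ≠ 0 := by
      simp only [Function.update_eq_self]
      positivity
    have hdiv := hnum0.div hden hdenne
    have hfun : (fun t : ℝ => γ (Function.update u k t) i j)
        = fun t => (G * (A0 + Real.tanh (ρ * t) • B0)⁻¹) i j
            / (Real.cosh (ρ * Function.update u k t i)
                * Real.cosh (ρ * Function.update u k t j)) := by
      funext t
      rw [hγ _ i j hij, heq t]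
    rw [hfun]
    have hGMij : (G * (A0 + Real.tanh (ρ * u k) • B0)⁻¹) i j = Γ i j := by rw [hMA, hΓdef]
    refine hdiv.congr_deriv ?_
    simp only [Pi.mul_apply, Function.update_eq_self, hGMij]
  · -- off-diagonal values
    intro k hki hkj
    have hchk : Real.cosh (ρ * u k) ≠ 0 := (Real.cosh_pos _).ne'
    rw [hγ u i k (Ne.symm hki), hγ u k j hkj, ← hTdef, ← hMdef, ← hΓdef]
    simp only [if_neg (Ne.symm hki), if_neg (Ne.symm hkj)]
    field_simp
    ring
  · -- sum is zero
    rw [← Finset.sum_div]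
    have hsum : ∑ k, (Γ i k * Γ k j / Real.cosh (ρ * u k) ^ 2
          * (Real.cosh (ρ * u i) * Real.cosh (ρ * u j))
        - Γ i j * ((if i = k then ρ * Real.sinh (ρ * u k) else 0) * Real.cosh (ρ * u j)
          + Real.cosh (ρ * u i) * (if j = k then ρ * Real.sinh (ρ * u k) else 0))) = 0 := by
      rw [Finset.sum_sub_distrib]
      have s1 : ∑ k, Γ i k * Γ k j / Real.cosh (ρ * u k) ^ 2
            * (Real.cosh (ρ * u i) * Real.cosh (ρ * u j))
          = (∑ k, Γ i k * Γ k j * (1 / Real.cosh (ρ * u k) ^ 2))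
            * (Real.cosh (ρ * u i) * Real.cosh (ρ * u j)) := by
        rw [Finset.sum_mul]
        congr 1; funext k; ring
      have s2 : ∑ k, Γ i j * ((if i = k then ρ * Real.sinh (ρ * u k) else 0)
            * Real.cosh (ρ * u j)
          + Real.cosh (ρ * u i) * (if j = k then ρ * Real.sinh (ρ * u k) else 0))
          = Γ i j * (ρ * Real.sinh (ρ * u i) * Real.cosh (ρ * u j)
            + Real.cosh (ρ * u i) * (ρ * Real.sinh (ρ * u j))) := by
        rw [← Finset.mul_sum]
        congr 1
        rw [Finset.sum_add_distrib]
        congr 1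
        · rw [← Finset.sum_mul, Finset.sum_ite_eq]
          simp
        · rw [← Finset.mul_sum, Finset.sum_ite_eq]
          simp
      rw [s1, s2, key]
      have hti : Real.tanh (ρ * u i) = Real.sinh (ρ * u i) / Real.cosh (ρ * u i) :=
        Real.tanh_eq_sinh_div_cosh _
      have htj : Real.tanh (ρ * u j) = Real.sinh (ρ * u j) / Real.cosh (ρ * u j) :=
        Real.tanh_eq_sinh_div_cosh _
      rw [hti, htj]
      field_simp
      ring
    rw [hsum, zero_div]
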